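/- Let α be a non-principal ultrafilter on ℕ and f : ℕ → ℕ. The following statements are equivalent: (i) f is α-faithful; (ii) α ∼_RK α^f; (iii) there exists a bijection g : ℕ → ℕ such that α^{g⁻¹ ∘ f} = α; (iv) f is α-injective. -/

import Mathlib

/-- `f` is `α`-constant: the restriction of `f` to some `A ∈ α` is constant. -/
def AlphaConstant (α : Ultrafilter ℕ) (f : ℕ → ℕ) : Prop :=
  ∃ A ∈ α, ∃ c, ∀ i ∈ A, f i = c

/-- `f` is `α`-injective: the restriction of `f` to some `A ∈ α` is injective. -/
def AlphaInjective (α : Ultrafilter ℕ) (f : ℕ → ℕ) : Prop :=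
  ∃ A ∈ α, Set.InjOn f A

/-- `f` is `α`-faithful: `f` is not `α`-constant and there is `K ∈ α` such that
for every `A ⊆ ℕ`, `f[A ∩ K] ∈ α^f` implies `A ∩ K ∈ α`. -/
def AlphaFaithful (α : Ultrafilter ℕ) (f : ℕ → ℕ) : Prop :=
  ¬ AlphaConstant α f ∧
    ∃ K ∈ α, ∀ A : Set ℕ, f '' (A ∩ K) ∈ Ultrafilter.map f α → A ∩ K ∈ α

/-- `α ∼_RK β` : there is a bijection `h : ℕ → ℕ` with `β = α^h`. -/
def RKEquiv (α β : Ultrafilter ℕ) : Prop :=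
  ∃ h : ℕ → ℕ, Function.Bijective h ∧ β = Ultrafilter.map h α


lemma lemA (g : ℕ → ℕ) (hg : ∀ n, n < g n) : ∃ c : ℕ → Bool, ∀ n, c (g n) ≠ c n := by
  classical
  have hiter : ∀ (i j : ℕ) (x : ℕ), g^[i] (g^[j] x) = g^[i+j] x := fun i j x =>
    (Function.iterate_add_apply g i j x).symm
  have hmono : ∀ r : ℕ, StrictMono (fun j => g^[j] r) := fun r =>
    strictMono_nat_of_lt_succ (fun j => by
      simp only [Function.iterate_succ_apply']; exact hg _)
  let E : ℕ → ℕ → Prop := fun n m => ∃ p : ℕ × ℕ, g^[p.1] n = g^[p.2] m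
  have hrefl : ∀ n, E n n := fun n => ⟨(0,0), rfl⟩
  have hsymm : ∀ {n m}, E n m → E m n := fun ⟨p, hp⟩ => ⟨(p.2, p.1), hp.symm⟩
  have htrans : ∀ {n m p}, E n m → E m p → E n p := by
    rintro n m p ⟨⟨i,j⟩, hij⟩ ⟨⟨s,t⟩, hst⟩
    exact ⟨(s+i, j+t), by
      simp only at hij hst
      rw [← hiter s i n, hij, hiter s j m, ← hiter j t p, ← hst, hiter, Nat.add_comm s j]⟩
  let S : Setoid ℕ := ⟨E, hrefl, @hsymm, @htrans⟩
  let rep : ℕ → ℕ := fun n => (Quotient.mk S n).out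
  have hrep : ∀ n, E n (rep n) := fun n =>
    @hsymm _ _ (Quotient.exact (Quotient.out_eq (Quotient.mk S n)))
  have hrepg : ∀ n, rep (g n) = rep n := by
    intro n
    have h1 : Quotient.mk S (g n) = Quotient.mk S n :=
      Quotient.sound (@hsymm n (g n) ⟨(1,0), rfl⟩)
    simp only [rep, h1]
  have hwd : ∀ n i j i' j', g^[i] n = g^[j] (rep n) → g^[i'] n = g^[j'] (rep n) →
      i + j' = i' + j := by
    intro n i j i' j' h1 h2
    have e1 : g^[i'+j] (rep n) = g^[i+j'] (rep n) := by
      rw [← hiter i' j, ← h1, hiter i' i, Nat.add_comm i' i, ← hiter i i', h2, hiter]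
    have := (hmono (rep n)).injective e1
    omega
  let c : ℕ → Bool := fun n => decide ((((hrep n).choose.1 + (hrep n).choose.2) % 2) = 0)
  refine ⟨c, fun n => ?_⟩
  have h1 := (hrep n).choose_spec
  have h2 := (hrep (g n)).choose_spec
  have h2' : g^[(hrep (g n)).choose.1 + 1] n = g^[(hrep (g n)).choose.2] (rep n) := by
    rw [Function.iterate_succ_apply, h2]
    exact congrArg _ (hrepg n)
  have key := hwd n _ _ _ _ h1 h2'
  simp only [c, ne_eq, decide_eq_decide]
  omega


noncomputable def rk (k : ℕ → ℕ) : ℕ → ℕ := fun n =>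
  if h : k n < n then rk k (k n) + 1 else 0
termination_by n => n
decreasing_by exact h

lemma rk_eq (k : ℕ → ℕ) (n : ℕ) (h : k n < n) : rk k n = rk k (k n) + 1 := by
  rw [rk]; simp [h]


lemma key (α : Ultrafilter ℕ) (k : ℕ → ℕ) (h : Ultrafilter.map k α = α) :
    {n | k n = n} ∈ α := by
  classical
  by_contra hF
  have hT : {n | k n ≠ n} ∈ α := Ultrafilter.compl_mem_iff_notMem.mpr hF
  have hpre : ∀ C ∈ α, ∃ n, n ∈ C ∧ k n ∈ C := by
    intro C hC
    have h1 : k ⁻¹' C ∈ α := by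
      rw [← h] at hC
      exact hC
    obtain ⟨n, hn1, hn2⟩ := Ultrafilter.nonempty_of_mem (α.inter_mem hC h1)
    exact ⟨n, hn1, hn2⟩
  have hDU : {n | k n < n} ∈ α ∨ {n | n < k n} ∈ α := by
    rcases Ultrafilter.mem_or_compl_mem α {n | k n < n} with h1 | h2
    · exact Or.inl h1
    · right
      have : {n | k n ≠ n} ∩ {n | k n < n}ᶜ ⊆ {n | n < k n} := by
        intro n ⟨hn1, hn2⟩
        simp only [Set.mem_compl_iff, Set.mem_setOf_eq, not_lt] at *
        omega
      exact Filter.mem_of_superset (α.inter_mem hT h2) this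
  rcases hDU with hD | hU
  · -- decreasing case: rank parity
    set c : ℕ → Bool := fun n => decide (rk k n % 2 = 0) with hc
    rcases Ultrafilter.mem_or_compl_mem α {n | c n = true} with hb | hb
    · obtain ⟨n, ⟨hn1, hn2⟩, ⟨hm1, hm2⟩⟩ := hpre _ (α.inter_mem hD hb)
      have := rk_eq k n hn1
      simp only [hc, Set.mem_setOf_eq, decide_eq_true_eq] at hn2 hm2
      omega
    · obtain ⟨n, ⟨hn1, hn2⟩, ⟨hm1, hm2⟩⟩ := hpre _ (α.inter_mem hD hb)
      have := rk_eq k n hn1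
      simp only [hc, Set.mem_compl_iff, Set.mem_setOf_eq, decide_eq_true_eq] at hn2 hm2
      omega
  · -- increasing case: lemA
    set g : ℕ → ℕ := fun n => if n < k n then k n else n + 1 with hgdef
    have hg : ∀ n, n < g n := by
      intro n; simp only [hgdef]; split <;> omega
    obtain ⟨c, hcol⟩ := lemA g hg
    have hgk : ∀ n ∈ {n | n < k n}, g n = k n := by
      intro n hn; simp only [hgdef]; exact if_pos hn
    rcases Ultrafilter.mem_or_compl_mem α {n | c n = true} with hb | hb
    · obtain ⟨n, ⟨hn1, hn2⟩, ⟨hm1, hm2⟩⟩ := hpre _ (α.inter_mem hU hb)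
      have := hcol n
      rw [hgk n hn1] at this
      simp only [Set.mem_setOf_eq] at hn2 hm2
      exact this (hm2.trans hn2.symm)
    · obtain ⟨n, ⟨hn1, hn2⟩, ⟨hm1, hm2⟩⟩ := hpre _ (α.inter_mem hU hb)
      have := hcol n
      rw [hgk n hn1] at this
      simp only [Set.mem_compl_iff, Set.mem_setOf_eq, Bool.not_eq_true] at hn2 hm2
      exact this (hm2.trans hn2.symm)


lemma mem_infinite (α : Ultrafilter ℕ) (hα : (α : Filter ℕ) ≤ Filter.cofinite)
    {s : Set ℕ} (hs : s ∈ α) : s.Infinite := by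
  intro hfin
  have : sᶜ ∈ α := hα hfin.compl_mem_cofinite
  exact (Ultrafilter.compl_notMem_iff.mpr hs) this

lemma extend_bij (α : Ultrafilter ℕ) (hα : (α : Filter ℕ) ≤ Filter.cofinite) (f : ℕ → ℕ)
    (A : Set ℕ) (hA : A ∈ α) (hinj : Set.InjOn f A) :
    ∃ g : ℕ ≃ ℕ, ∃ B ∈ α, B ⊆ A ∧ ∀ n ∈ B, g n = f n := by
  classical
  have hAinf : A.Infinite := mem_infinite α hα hA
  let e := hAinf.natEmbedding
  let C : Set ℕ := Set.range fun n => (e (2 * n) : ℕ)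
  have hCA : C ⊆ A := by rintro x ⟨n, rfl⟩; exact (e (2*n)).2
  have hCinf : C.Infinite := Set.infinite_range_of_injective (fun a b hab => by
    have := e.injective (Subtype.ext hab); omega)
  have hACinf : (A \ C).Infinite := by
    apply Set.infinite_coe_iff.mp ?_
    have hsub : Set.range (fun n => (e (2 * n + 1) : ℕ)) ⊆ A \ C := by
      rintro x ⟨n, rfl⟩
      refine ⟨(e (2*n+1)).2, ?_⟩
      rintro ⟨m, hm⟩
      have := e.injective (Subtype.ext hm); omega
    have : (Set.range fun n => (e (2 * n + 1) : ℕ)).Infinite :=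
      Set.infinite_range_of_injective (fun a b hab => by
        have := e.injective (Subtype.ext hab); omega)
    exact Set.infinite_coe_iff.mpr (this.mono hsub)
  -- choose B
  obtain ⟨B, hB, hBA, hRinf⟩ :
      ∃ B ∈ α, B ⊆ A ∧ (A \ B).Infinite := by
    rcases Ultrafilter.mem_or_compl_mem α C with hc | hc
    · refine ⟨A ∩ C, α.inter_mem hA hc, Set.inter_subset_left, ?_⟩
      exact hACinf.mono (fun x hx => ⟨hx.1, fun h => hx.2 h.2⟩)
    · refine ⟨A ∩ Cᶜ, α.inter_mem hA hc, Set.inter_subset_left, ?_⟩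
      refine hCinf.mono (fun x hx => ⟨hCA hx, fun h => h.2 hx⟩)
  have hinjB : Set.InjOn f B := hinj.mono hBA
  have hBcinf : (Bᶜ : Set ℕ).Infinite :=
    hRinf.mono (fun x hx => fun h => hx.2 h)
  have hfBcinf : ((f '' B)ᶜ : Set ℕ).Infinite := by
    have h1 : (f '' (A \ B)).Infinite :=
      hRinf.image (hinj.mono Set.diff_subset)
    refine h1.mono ?_
    rintro x ⟨r, hr, rfl⟩ ⟨b, hb, hfb⟩
    exact hr.2 (hinj (hBA hb) hr.1 hfb ▸ hb)
  haveI i1 : Infinite ↥(Bᶜ : Set ℕ) := Set.infinite_coe_iff.mpr hBcinf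
  haveI i2 : Infinite ↥((f '' B)ᶜ : Set ℕ) := Set.infinite_coe_iff.mpr hfBcinf
  obtain ⟨ψ⟩ : Nonempty (↥(Bᶜ : Set ℕ) ≃ ↥((f '' B)ᶜ : Set ℕ)) := inferInstance
  let φ : ↥B ≃ ↥(f '' B) := Equiv.Set.imageOfInjOn f B hinjB
  let g : ℕ ≃ ℕ :=
    ((Equiv.Set.sumCompl B).symm.trans ((φ.sumCongr ψ).trans (Equiv.Set.sumCompl (f '' B))))
  refine ⟨g, B, hB, hBA, fun n hn => ?_⟩
  simp only [g, Equiv.trans_apply, Equiv.Set.sumCompl_symm_apply_of_mem hn, Equiv.sumCongr_apply,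
    Sum.map_inl, Equiv.Set.sumCompl_apply_inl]
  rfl


theorem stmt_1 (α : Ultrafilter ℕ) (hα : (α : Filter ℕ) ≤ Filter.cofinite)
    (f : ℕ → ℕ) :
    List.TFAE
      [AlphaFaithful α f,
       RKEquiv α (Ultrafilter.map f α),
       ∃ g : ℕ ≃ ℕ, Ultrafilter.map (⇑g.symm ∘ f) α = α,
       AlphaInjective α f] := by
  classical
  tfae_have 1 → 4 := by
    rintro ⟨hnc, K, hK, hfaith⟩
    set S : Set ℕ := {n | n ∈ K ∧ ∀ m ∈ K, f m = f n → n ≤ m} with hSdef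
    have hSK : S ⊆ K := fun n hn => hn.1
    have hSiK : S ∩ K = S := Set.inter_eq_left.mpr hSK
    have himg : f '' (S ∩ K) ∈ Ultrafilter.map f α := by
      rw [hSiK]
      have himgeq : f '' S = f '' K := by
        apply Set.Subset.antisymm (Set.image_mono hSK)
        rintro x ⟨a, ha, rfl⟩
        have hex : ∃ m, m ∈ K ∧ f m = f a := ⟨a, ha, rfl⟩
        refine ⟨Nat.find hex, ⟨(Nat.find_spec hex).1, fun m hm hfm => ?_⟩,
          (Nat.find_spec hex).2⟩
        exact Nat.find_min' hex ⟨hm, hfm.trans (Nat.find_spec hex).2⟩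
      rw [himgeq, Ultrafilter.mem_map]
      exact Filter.mem_of_superset hK (Set.subset_preimage_image f K)
    have hS : S ∈ α := hSiK ▸ hfaith S himg
    refine ⟨S, hS, fun a ha b hb hab => ?_⟩
    exact le_antisymm (ha.2 b hb.1 hab.symm) (hb.2 a ha.1 hab)
  tfae_have 4 → 1 := by
    rintro ⟨A, hA, hinj⟩
    constructor
    · rintro ⟨B, hB, c, hc⟩
      obtain ⟨x, hx, y, hy, hxy⟩ := (mem_infinite α hα (α.inter_mem hA hB)).nontrivial
      exact hxy (hinj hx.1 hy.1 ((hc x hx.2).trans (hc y hy.2).symm))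
    · refine ⟨A, hA, fun A' himg => ?_⟩
      have hpre : f ⁻¹' (f '' (A' ∩ A)) ∈ α := Ultrafilter.mem_map.mp himg
      have hsub : f ⁻¹' (f '' (A' ∩ A)) ∩ A ⊆ A' ∩ A := by
        rintro x ⟨hx, hxA⟩
        obtain ⟨y, hy, hxy⟩ := hx
        rwa [← hinj hy.2 hxA hxy]
      exact Filter.mem_of_superset (α.inter_mem hpre hA) hsub
  tfae_have 4 → 3 := by
    rintro ⟨A, hA, hinj⟩
    obtain ⟨g, B, hB, hBA, hg⟩ := extend_bij α hα f A hA hinj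
    refine ⟨g, ?_⟩
    apply Ultrafilter.coe_injective
    rw [Ultrafilter.coe_map]
    have heq : (⇑g.symm ∘ f) =ᶠ[(α : Filter ℕ)] id :=
      Filter.eventuallyEq_of_mem hB (fun n hn => by
        simp [Function.comp, ← hg n hn])
    rw [Filter.map_congr heq, Filter.map_id]
  tfae_have 3 → 2 := by
    rintro ⟨g, hg⟩
    refine ⟨g, g.bijective, ?_⟩
    have h2 := congrArg (Ultrafilter.map ⇑g) hg
    rw [Ultrafilter.map_map] at h2
    have h3 : (⇑g ∘ (⇑g.symm ∘ f)) = f := by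
      funext x; simp
    rw [h3] at h2
    exact h2
  tfae_have 2 → 4 := by
    rintro ⟨h, hbij, heq⟩
    set e := Equiv.ofBijective h hbij with he
    have hk : Ultrafilter.map (⇑e.symm ∘ f) α = α := by
      have h2 := congrArg (Ultrafilter.map ⇑e.symm) heq
      rw [Ultrafilter.map_map, Ultrafilter.map_map] at h2
      have h3 : (⇑e.symm ∘ h) = id := by
        funext x
        exact e.symm_apply_apply x
      rw [h3, Ultrafilter.map_id] at h2
      exact h2
    have hfix := key α (⇑e.symm ∘ f) hk
    refine ⟨{n | (⇑e.symm ∘ f) n = n}, hfix, fun a ha b hb hab => ?_⟩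
    simp only [Set.mem_setOf_eq, Function.comp_apply] at ha hb
    rw [← ha, ← hb, hab]
  tfae_finish
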